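/- Let p be a prime, q = p^e a power of p, ℓ a prime different from p, and n a positive integer divisible by neither p nor ℓ. Let γ be an integer and τ the size of the q-cyclotomic coset c_{n/q}(γ) modulo n. Then for every N ≥ 0 there is exactly one q-cyclotomic coset modulo ℓ^N n whose image under the canonical projection ℤ/ℓ^N nℤ → ℤ/nℤ equals c_{n/q}(γ) and all of whose elements are divisible by ℓ^N; moreover this coset has size τ. -/

import Mathlib

/-- The `q`-cyclotomic coset modulo `m` containing (the class of) the integer `γ`,
as a subset of `ZMod m`. -/
def cycCoset (q m : ℕ) (γ : ℤ) : Set (ZMod m) :=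
  {x | ∃ j : ℕ, x = (γ : ZMod m) * (q : ZMod m) ^ j}

/-- `goodCoset q ℓ n N γ δ` says that the `q`-cyclotomic coset modulo `ℓ^N * n`
containing `δ` projects onto `c_{n/q}(γ)` and all of its elements are divisible
by `ℓ^N`. -/
def goodCoset (q ℓ n N : ℕ) (γ δ : ℤ) : Prop :=
  (ZMod.castHom (dvd_mul_left n (ℓ ^ N)) (ZMod n)) '' (cycCoset q (ℓ ^ N * n) δ) =
      cycCoset q n γ ∧
    ∀ x ∈ cycCoset q (ℓ ^ N * n) δ,
      ∃ y : ℤ, (y : ZMod (ℓ ^ N * n)) = x ∧ (ℓ : ℤ) ^ N ∣ y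

lemma cast_mem_cycCoset (q M : ℕ) (δ : ℤ) (j : ℕ) :
    ((δ * (q:ℤ)^j : ℤ) : ZMod M) ∈ cycCoset q M δ := ⟨j, by push_cast; ring⟩

lemma mem_cycCoset_iff (q M : ℕ) (δ : ℤ) (x : ZMod M) :
    x ∈ cycCoset q M δ ↔ ∃ j : ℕ, x = ((δ * (q:ℤ)^j : ℤ) : ZMod M) := by
  constructor
  · rintro ⟨j, rfl⟩; exact ⟨j, by push_cast; ring⟩
  · rintro ⟨j, rfl⟩; exact cast_mem_cycCoset q M δ j

lemma cycCoset_subset (q M : ℕ) {δ₁ δ₂ : ℤ} (a : ℕ)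
    (h : δ₂ ≡ δ₁ * (q:ℤ)^a [ZMOD (M:ℤ)]) :
    cycCoset q M δ₂ ⊆ cycCoset q M δ₁ := by
  intro x hx
  rw [mem_cycCoset_iff] at hx ⊢
  obtain ⟨j, rfl⟩ := hx
  refine ⟨a + j, ?_⟩
  rw [ZMod.intCast_eq_intCast_iff]
  calc δ₂ * (q:ℤ)^j ≡ (δ₁ * (q:ℤ)^a) * (q:ℤ)^j [ZMOD (M:ℤ)] := h.mul_right _
    _ = δ₁ * (q:ℤ)^(a+j) := by ring

lemma cycCoset_eq (q M : ℕ) (hk : ∃ k, 0 < k ∧ (q:ℤ)^k ≡ 1 [ZMOD (M:ℤ)]) {δ₁ δ₂ : ℤ} (a : ℕ)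
    (h : δ₂ ≡ δ₁ * (q:ℤ)^a [ZMOD (M:ℤ)]) : cycCoset q M δ₁ = cycCoset q M δ₂ := by
  obtain ⟨k, hk0, hk1⟩ := hk
  refine Set.Subset.antisymm ?_ (cycCoset_subset q M a h)
  have hle : a ≤ a * k := Nat.le_mul_of_pos_right a hk0
  apply cycCoset_subset q M (a * k - a)
  have hq : (q:ℤ)^(a*k) ≡ 1 [ZMOD (M:ℤ)] := by
    have := hk1.pow a
    simpa [← pow_mul, mul_comm] using this
  calc δ₁ ≡ δ₁ * (q:ℤ)^(a*k) [ZMOD (M:ℤ)] := by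
        simpa using (Int.ModEq.mul_left δ₁ hq).symm
    _ = (δ₁ * (q:ℤ)^a) * (q:ℤ)^(a*k-a) := by
        rw [mul_assoc, ← pow_add]; congr 2; omega
    _ ≡ δ₂ * (q:ℤ)^(a*k-a) [ZMOD (M:ℤ)] := (h.symm).mul_right _

lemma cancel_coprime {m a b c : ℤ} (hm : 0 < m) (h : Int.gcd m c = 1)
    (hab : a * c ≡ b * c [ZMOD m]) : a ≡ b [ZMOD m] := by
  have := Int.ModEq.cancel_right_div_gcd hm hab
  simpa [h] using this

theorem stmt_11 (p e q ℓ n : ℕ) (hp : p.Prime) (he : 0 < e) (hq : q = p ^ e)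
    (hℓ : ℓ.Prime) (hℓp : ℓ ≠ p)
    (hn : 0 < n) (hnp : ¬ p ∣ n) (hnℓ : ¬ ℓ ∣ n)
    (γ : ℤ) (τ : ℕ)
    (hτ : IsLeast {t : ℕ | 0 < t ∧ γ * (q : ℤ) ^ t ≡ γ [ZMOD (n : ℤ)]} τ) :
    ∀ N : ℕ,
      (∃ δ : ℤ, goodCoset q ℓ n N γ δ) ∧
      (∀ δ₁ δ₂ : ℤ, goodCoset q ℓ n N γ δ₁ → goodCoset q ℓ n N γ δ₂ →
        cycCoset q (ℓ ^ N * n) δ₁ = cycCoset q (ℓ ^ N * n) δ₂) ∧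
      (∀ δ : ℤ, goodCoset q ℓ n N γ δ →
        IsLeast {j : ℕ | 0 < j ∧ δ * (q : ℤ) ^ j ≡ δ [ZMOD ((ℓ ^ N * n : ℕ) : ℤ)]} τ) := by
  intro N
  have hMpos : 0 < ℓ ^ N * n := Nat.mul_pos (pow_pos hℓ.pos N) hn
  have hpn : Nat.Coprime p n := hp.coprime_iff_not_dvd.mpr hnp
  have hℓn : Nat.Coprime ℓ n := hℓ.coprime_iff_not_dvd.mpr hnℓ
  have hpl : Nat.Coprime p ℓ := (Nat.coprime_primes hp hℓ).mpr hℓp.symm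
  have hcop : Nat.Coprime (ℓ ^ N) n := hℓn.pow_left N
  have hqn : Nat.Coprime q n := by rw [hq]; exact hpn.pow_left e
  have hqM : Nat.Coprime q (ℓ ^ N * n) := by
    rw [hq]; exact ((hpl.pow_right N).mul_right hpn).pow_left e
  -- q is "invertible" mod M
  have hk : ∃ k, 0 < k ∧ (q:ℤ)^k ≡ 1 [ZMOD ((ℓ ^ N * n : ℕ) : ℤ)] := by
    refine ⟨(ℓ ^ N * n).totient, Nat.totient_pos.mpr hMpos, ?_⟩
    have h1 : q ^ (ℓ ^ N * n).totient ≡ 1 [MOD ℓ ^ N * n] := Nat.ModEq.pow_totient hqM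
    have h2 := Int.natCast_modEq_iff.mpr h1
    push_cast at h2 ⊢
    exact h2
  -- CRT combination
  have crt : ∀ a b : ℤ, a ≡ b [ZMOD ((ℓ:ℤ)^N)] → a ≡ b [ZMOD (n:ℤ)] →
      a ≡ b [ZMOD ((ℓ ^ N * n : ℕ) : ℤ)] := by
    intro a b h1 h2
    have hco : ((ℓ:ℤ)^N).natAbs.Coprime ((n:ℤ)).natAbs := by
      simpa [Int.natAbs_pow] using hcop
    have h3 := (Int.modEq_and_modEq_iff_modEq_mul hco).mp ⟨h1, h2⟩
    have : ((ℓ ^ N * n : ℕ) : ℤ) = (ℓ:ℤ)^N * (n:ℤ) := by push_cast; ring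
    rwa [this]
  -- a δ is good iff it is ≡ γ mod n and divisible by ℓ^N; existence part:
  have good_of : ∀ δ : ℤ, (ℓ:ℤ)^N ∣ δ → δ ≡ γ [ZMOD (n:ℤ)] → goodCoset q ℓ n N γ δ := by
    intro δ hdℓ hdn
    constructor
    · ext x
      simp only [Set.mem_image]
      constructor
      · rintro ⟨y, hy, rfl⟩
        rw [mem_cycCoset_iff] at hy
        obtain ⟨j, rfl⟩ := hy
        rw [map_intCast, mem_cycCoset_iff]
        exact ⟨j, by rw [ZMod.intCast_eq_intCast_iff]; exact hdn.mul_right _⟩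
      · intro hx
        rw [mem_cycCoset_iff] at hx
        obtain ⟨j, rfl⟩ := hx
        refine ⟨((δ * (q:ℤ)^j : ℤ) : ZMod (ℓ ^ N * n)), cast_mem_cycCoset q _ δ j, ?_⟩
        rw [map_intCast, ZMod.intCast_eq_intCast_iff]
        exact hdn.mul_right _
    · intro x hx
      rw [mem_cycCoset_iff] at hx
      obtain ⟨j, rfl⟩ := hx
      exact ⟨δ * (q:ℤ)^j, rfl, hdℓ.mul_right _⟩
  -- extraction: from goodness get divisibility of δ and a power identity mod n
  have extract : ∀ δ : ℤ, goodCoset q ℓ n N γ δ →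
      (δ ≡ 0 [ZMOD ((ℓ:ℤ)^N)]) ∧ ∃ a : ℕ, δ * (q:ℤ)^a ≡ γ [ZMOD (n:ℤ)] := by
    rintro δ ⟨him, hdiv⟩
    constructor
    · obtain ⟨y, hy, hyd⟩ := hdiv _ (cast_mem_cycCoset q (ℓ ^ N * n) δ 0)
      rw [ZMod.intCast_eq_intCast_iff] at hy
      have hdvd : (ℓ:ℤ)^N ∣ ((ℓ ^ N * n : ℕ) : ℤ) := by
        refine ⟨(n:ℤ), by push_cast; ring⟩
      have h1 : y ≡ δ * (q:ℤ)^0 [ZMOD ((ℓ:ℤ)^N)] := hy.of_dvd hdvd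
      have h2 : δ ≡ y [ZMOD ((ℓ:ℤ)^N)] := by simpa using h1.symm
      exact h2.trans (Int.modEq_zero_iff_dvd.mpr hyd)
    · have hγ : (γ : ZMod n) ∈ cycCoset q n γ := by
        rw [mem_cycCoset_iff]; exact ⟨0, by push_cast; ring_nf⟩
      rw [← him] at hγ
      obtain ⟨x, hx, hcast⟩ := hγ
      rw [mem_cycCoset_iff] at hx
      obtain ⟨a, rfl⟩ := hx
      rw [map_intCast] at hcast
      exact ⟨a, (ZMod.intCast_eq_intCast_iff _ _ _).mp hcast⟩
  -- the canonical good δ, from Bézout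
  have hbez : IsCoprime ((ℓ:ℤ)^N) (n:ℤ) := by
    rw [Int.isCoprime_iff_gcd_eq_one,
      show ((ℓ:ℤ)^N) = ((ℓ^N:ℕ):ℤ) by push_cast; ring, Int.gcd_natCast_natCast]
    exact hcop
  obtain ⟨u, v, huv⟩ := hbez
  refine ⟨⟨γ * (u * (ℓ:ℤ)^N), good_of _ ⟨γ * u, by ring⟩ ?_⟩, ?_, ?_⟩
  · rw [Int.modEq_iff_dvd]
    exact ⟨γ * v, by linear_combination -γ * huv⟩
  · -- uniqueness
    intro δ₁ δ₂ h₁ h₂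
    obtain ⟨hd₁, a₁, ha₁⟩ := extract δ₁ h₁
    obtain ⟨hd₂, a₂, ha₂⟩ := extract δ₂ h₂
    have key : δ₂ * (q:ℤ)^a₂ ≡ δ₁ * (q:ℤ)^a₁ [ZMOD ((ℓ ^ N * n : ℕ) : ℤ)] := by
      apply crt
      · have e1 : δ₂ * (q:ℤ)^a₂ ≡ 0 [ZMOD ((ℓ:ℤ)^N)] := by
          have := hd₂.mul_right ((q:ℤ)^a₂); simpa using this
        have e2 : δ₁ * (q:ℤ)^a₁ ≡ 0 [ZMOD ((ℓ:ℤ)^N)] := by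
          have := hd₁.mul_right ((q:ℤ)^a₁); simpa using this
        exact e1.trans e2.symm
      · exact ha₂.trans ha₁.symm
    calc cycCoset q (ℓ ^ N * n) δ₁
        = cycCoset q (ℓ ^ N * n) (δ₁ * (q:ℤ)^a₁) := cycCoset_eq q _ hk a₁ Int.ModEq.rfl
      _ = cycCoset q (ℓ ^ N * n) (δ₂ * (q:ℤ)^a₂) :=
          cycCoset_eq q _ hk 0 (by simpa using key)
      _ = cycCoset q (ℓ ^ N * n) δ₂ := (cycCoset_eq q _ hk a₂ Int.ModEq.rfl).symm
  · -- size
    intro δ hδ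
    obtain ⟨hdℓ, a, ha⟩ := extract δ hδ
    have hgcd : Int.gcd (n:ℤ) ((q:ℤ)^a) = 1 := by
      have h1 : Nat.Coprime n (q ^ a) := (hqn.pow_left a).symm
      have h2 : ((q:ℤ)^a) = ((q^a : ℕ):ℤ) := by push_cast; ring
      rw [h2, Int.gcd_natCast_natCast]; exact h1
    constructor
    · refine ⟨hτ.1.1, ?_⟩
      apply crt
      · have h1 := hdℓ.mul_right ((q:ℤ)^τ)
        rw [zero_mul] at h1
        exact h1.trans hdℓ.symm
      · apply cancel_coprime (show (0:ℤ) < n by exact_mod_cast hn) hgcd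
        calc δ * (q:ℤ)^τ * (q:ℤ)^a = (δ * (q:ℤ)^a) * (q:ℤ)^τ := by ring
          _ ≡ γ * (q:ℤ)^τ [ZMOD (n:ℤ)] := ha.mul_right _
          _ ≡ γ [ZMOD (n:ℤ)] := hτ.1.2
          _ ≡ δ * (q:ℤ)^a [ZMOD (n:ℤ)] := ha.symm
    · rintro j ⟨hj0, hjm⟩
      apply hτ.2
      refine ⟨hj0, ?_⟩
      have hdvd : (n:ℤ) ∣ ((ℓ ^ N * n : ℕ) : ℤ) := ⟨(ℓ:ℤ)^N, by push_cast; ring⟩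
      have hjn : δ * (q:ℤ)^j ≡ δ [ZMOD (n:ℤ)] := hjm.of_dvd hdvd
      calc γ * (q:ℤ)^j ≡ (δ * (q:ℤ)^a) * (q:ℤ)^j [ZMOD (n:ℤ)] := (ha.symm).mul_right _
        _ = (δ * (q:ℤ)^j) * (q:ℤ)^a := by ring
        _ ≡ δ * (q:ℤ)^a [ZMOD (n:ℤ)] := hjn.mul_right _
        _ ≡ γ [ZMOD (n:ℤ)] := ha
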